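/- For every k ≥ 1, there exists a graph G on k + 2^k vertices and an orientation G⃗ of G such that the adjacency dimension of G is at most k, while the broadcast dimension of the directed graph G⃗ is at least 2^k. -/

import Mathlib

open SimpleGraph Finset

/-- `A` is an adjacency resolving set of `G`. -/
def IsAdjResolving {V : Type*} (G : SimpleGraph V) (A : Set V) : Prop :=
  ∀ x y : V, x ≠ y → ∃ z ∈ A, min (G.edist z x) 2 ≠ min (G.edist z y) 2

/-- The adjacency dimension of `G`. -/
noncomputable def adim {V : Type*} [Fintype V] [DecidableEq V] (G : SimpleGraph V) : ℕ :=
  sInf {n | ∃ A : Finset V, IsAdjResolving G ↑A ∧ A.card = n}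

/-- `C` is a locating-dominating set of `G`. -/
def IsLocDom {V : Type*} (G : SimpleGraph V) (C : Set V) : Prop :=
  (∀ v ∉ C, ((G.neighborSet v ∪ {v}) ∩ C).Nonempty) ∧
  ∀ u ∉ C, ∀ v ∉ C, u ≠ v →
    (G.neighborSet u ∪ {u}) ∩ C ≠ (G.neighborSet v ∪ {v}) ∩ C

/-- The locating-dominating number of `G`. -/
noncomputable def LD {V : Type*} [Fintype V] [DecidableEq V] (G : SimpleGraph V) : ℕ :=
  sInf {n | ∃ C : Finset V, IsLocDom G ↑C ∧ C.card = n}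

/-- `f` is a resolving broadcast of `G`. -/
def IsResolvingBroadcast {V : Type*} (G : SimpleGraph V) (f : V → ℕ) : Prop :=
  ∀ x y : V, x ≠ y → ∃ z, 0 < f z ∧
    min (G.edist z x) ((f z : ℕ∞) + 1) ≠ min (G.edist z y) ((f z : ℕ∞) + 1)

/-- The broadcast dimension of `G`. -/
noncomputable def bdim {V : Type*} [Fintype V] (G : SimpleGraph V) : ℕ :=
  sInf {n | ∃ f : V → ℕ, IsResolvingBroadcast G f ∧ ∑ v, f v = n}

/-- There is a directed path of length `m` from `u` to `v` in the digraph `D`. -/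
def DPath {V : Type*} (D : V → V → Prop) (u v : V) (m : ℕ) : Prop :=
  ∃ p : Fin (m + 1) → V, p 0 = u ∧ p (Fin.last m) = v ∧
    ∀ i : Fin m, D (p i.castSucc) (p i.succ)

/-- Directed distance in the digraph `D` (∞ if there is no directed path). -/
noncomputable def ddist {V : Type*} (D : V → V → Prop) (u v : V) : ℕ∞ :=
  sInf {n : ℕ∞ | ∃ m : ℕ, DPath D u v m ∧ n = m}

/-- `A` is an adjacency resolving set of the digraph `D`. -/
def IsDirAdjResolving {V : Type*} (D : V → V → Prop) (A : Set V) : Prop :=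
  ∀ x y : V, x ≠ y → ∃ z ∈ A, min (ddist D z x) 2 ≠ min (ddist D z y) 2

/-- The adjacency dimension of the digraph `D`. -/
noncomputable def dirAdim {V : Type*} [Fintype V] [DecidableEq V] (D : V → V → Prop) : ℕ :=
  sInf {n | ∃ A : Finset V, IsDirAdjResolving D ↑A ∧ A.card = n}

/-- `f` is a resolving broadcast of the digraph `D`. -/
def IsDirResolvingBroadcast {V : Type*} (D : V → V → Prop) (f : V → ℕ) : Prop :=
  ∀ x y : V, x ≠ y → ∃ z, 0 < f z ∧
    min (ddist D z x) ((f z : ℕ∞) + 1) ≠ min (ddist D z y) ((f z : ℕ∞) + 1)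

/-- The broadcast dimension of the digraph `D`. -/
noncomputable def dirBdim {V : Type*} [Fintype V] (D : V → V → Prop) : ℕ :=
  sInf {n | ∃ f : V → ℕ, IsDirResolvingBroadcast D f ∧ ∑ v, f v = n}

/-- `D` is an orientation of the simple graph `G`. -/
def IsOrientation {V : Type*} (G : SimpleGraph V) (D : V → V → Prop) : Prop :=
  (∀ u v, G.Adj u v ↔ (D u v ∨ D v u)) ∧ ∀ u v, ¬(D u v ∧ D v u)

namespace Scratch

lemma tb_le_log {m j : ℕ} (h : m.testBit j = true) : j ≤ Nat.log 2 m := by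
  have hm : m ≠ 0 := by rintro rfl; simp at h
  by_contra hc
  push_neg at hc
  have h2 : m < 2 ^ j := by
    by_contra hm2
    push_neg at hm2
    have : j ≤ Nat.log 2 m := (Nat.le_log_iff_pow_le one_lt_two hm).2 hm2
    omega
  rw [Nat.testBit_eq_false_of_lt h2] at h
  exact Bool.false_ne_true h

lemma tb_log {m : ℕ} (h : m ≠ 0) : m.testBit (Nat.log 2 m) = true := by
  have h1 : 2 ^ Nat.log 2 m ≤ m := Nat.pow_log_le_self 2 h
  have h2 : m < 2 ^ (Nat.log 2 m + 1) := Nat.lt_pow_succ_log_self one_lt_two m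
  rw [Nat.testBit_eq_decide_div_mod_eq]
  have hp : 0 < 2 ^ Nat.log 2 m := Nat.pow_pos (by norm_num)
  have hlo : 1 ≤ m / 2 ^ Nat.log 2 m := (Nat.one_le_div_iff hp).2 h1
  have hhi : m / 2 ^ Nat.log 2 m < 2 := by
    rw [Nat.div_lt_iff_lt_mul hp]
    rw [pow_succ] at h2
    omega
  have : m / 2 ^ Nat.log 2 m = 1 := by omega
  simp [this]

lemma log_lt {m k : ℕ} (hm : m < 2 ^ k) (hk : 1 ≤ k) : Nat.log 2 m < k := by
  rcases Nat.eq_zero_or_pos m with h | h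
  · simp [h]; omega
  · exact Nat.log_lt_of_lt_pow (by omega) hm


variable {V : Type*} {D : V → V → Prop}

lemma dpath_refl (u : V) : DPath D u u 0 :=
  ⟨fun _ => u, rfl, rfl, fun i => absurd i.2 (by omega)⟩

lemma dpath_zero {u v : V} (h : DPath D u v 0) : u = v := by
  obtain ⟨p, h0, h1, -⟩ := h
  rw [← h0, ← h1]
  rfl

lemma ddist_self (u : V) : ddist D u u = 0 :=
  le_antisymm (sInf_le ⟨0, dpath_refl u, rfl⟩) zero_le

lemma ddist_le_of_dpath {u v : V} {m : ℕ} (h : DPath D u v m) : ddist D u v ≤ m :=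
  sInf_le ⟨m, h, rfl⟩

lemma one_le_ddist {u v : V} (h : u ≠ v) : 1 ≤ ddist D u v := by
  apply le_sInf
  rintro b ⟨m, hp, rfl⟩
  rcases Nat.eq_zero_or_pos m with rfl | hm
  · exact absurd (dpath_zero hp) h
  · exact_mod_cast Nat.one_le_cast.2 hm

/-- prefix of a path -/
lemma dpath_prefix {u : V} {m : ℕ} (p : Fin (m+1) → V) (h0 : p 0 = u)
    (hstep : ∀ i : Fin m, D (p i.castSucc) (p i.succ)) (t : Fin (m+1)) :
    DPath D u (p t) t.val := by
  refine ⟨fun i => p ⟨i.val, by omega⟩, ?_, ?_, ?_⟩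
  · rw [← h0]; exact congrArg p (Fin.ext rfl)
  · exact congrArg p (Fin.ext rfl)
  · intro i
    have hi : i.val < m := by omega
    have := hstep ⟨i.val, hi⟩
    convert this using 2 <;> ext <;> simp [Fin.castSucc, Fin.succ, Fin.castAdd, Fin.castLE]

/-- replace the endpoint of a path, given the last edge can be redirected -/
lemma dpath_replace {u w w' : V} {m : ℕ} (hm : 0 < m) (p : Fin (m+1) → V)
    (h0 : p 0 = u) (h1 : p (Fin.last m) = w)
    (hstep : ∀ i : Fin m, D (p i.castSucc) (p i.succ))
    (hD : D (p ⟨m-1, by omega⟩) w') : DPath D u w' m := by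
  refine ⟨fun i => if i.val = m then w' else p i, ?_, ?_, ?_⟩
  · show (if (0 : Fin (m+1)).val = m then w' else p 0) = u
    rw [if_neg (by simp only [Fin.val_zero]; omega)]
    exact h0
  · simp [Fin.last]
  · intro i
    simp only
    have hic : (i.castSucc : Fin (m+1)).val = i.val := rfl
    have his : (i.succ : Fin (m+1)).val = i.val + 1 := rfl
    by_cases hcase : i.val + 1 = m
    · rw [hic, his, if_neg (by omega), if_pos (by omega)]
      have he : (i.castSucc : Fin (m+1)) = ⟨m-1, by omega⟩ := by
        ext
        show (i.castSucc : Fin (m+1)).val = m - 1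
        rw [hic]; omega
      rw [he]
      exact hD
    · rw [hic, his, if_neg (by omega), if_neg (by omega)]
      exact hstep i

end Scratch

namespace Scratch2
open Scratch

variable {V : Type*} {D : V → V → Prop} {s : V → ℕ}

/-- surgery: if last edges can be redirected within a star, paths to `w`
yield no-longer paths to `w'`. -/
lemma surgery (hK : ∀ u w w', D u w → s w = s w' → w' ≠ u → D u w')
    {z w w' : V} (hzw : z ≠ w) (hzw' : z ≠ w') (hs : s w = s w') {m : ℕ}
    (h : DPath D z w m) : ∃ m' ≤ m, DPath D z w' m' := by
  classical
  obtain ⟨p, h0, h1, hstep⟩ := h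
  by_cases hex : ∃ t : Fin (m+1), p t = w'
  · obtain ⟨t, ht⟩ := hex
    exact ⟨t.val, by omega, ht ▸ dpath_prefix p h0 hstep t⟩
  · push_neg at hex
    have hm : 0 < m := by
      rcases Nat.eq_zero_or_pos m with rfl | hm
      · exact absurd (dpath_zero ⟨p, h0, h1, hstep⟩) hzw
      · exact hm
    have hlast := hstep ⟨m-1, by omega⟩
    have hcs : ((⟨m-1, by omega⟩ : Fin m).castSucc : Fin (m+1)) = ⟨m-1, by omega⟩ := by
      ext; rfl
    have hsc : ((⟨m-1, by omega⟩ : Fin m).succ : Fin (m+1)) = Fin.last m := by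
      ext
      show (m-1) + 1 = m
      omega
    rw [hcs, hsc, h1] at hlast
    have hD' : D (p ⟨m-1, by omega⟩) w' := hK _ _ _ hlast hs (fun he => hex _ he.symm)
    exact ⟨m, le_refl m, dpath_replace hm p h0 h1 hstep hD'⟩

lemma ddist_le_ddist (hK : ∀ u w w', D u w → s w = s w' → w' ≠ u → D u w')
    {z w w' : V} (hzw : z ≠ w) (hzw' : z ≠ w') (hs : s w = s w') :
    ddist D z w' ≤ ddist D z w := by
  apply le_sInf
  rintro b ⟨m, hp, rfl⟩
  obtain ⟨m', hm', hp'⟩ := surgery hK hzw hzw' hs hp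
  exact le_trans (ddist_le_of_dpath hp') (by exact_mod_cast Nat.cast_le.2 hm')

lemma ddist_star_eq (hK : ∀ u w w', D u w → s w = s w' → w' ≠ u → D u w')
    {z w w' : V} (hzw : z ≠ w) (hzw' : z ≠ w') (hs : s w = s w') :
    ddist D z w = ddist D z w' :=
  le_antisymm (ddist_le_ddist hK hzw' hzw hs.symm) (ddist_le_ddist hK hzw hzw' hs)

end Scratch2

namespace Constr
open Scratch Scratch2

variable (k : ℕ)

def starV (v : Fin (k + 2^k)) : ℕ :=
  if v.val < k then v.val else Nat.log 2 (v.val - k)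

def Dk (u v : Fin (k + 2^k)) : Prop :=
  if u.val < k then (k ≤ v.val ∧ starV k v = u.val)
  else (Nat.testBit (u.val - k) (starV k v) = true ∧ starV k v ≠ Nat.log 2 (u.val - k))

variable {k}

lemma starV_lt (hk : 1 ≤ k) (v : Fin (k + 2^k)) : starV k v < k := by
  unfold starV
  split
  · assumption
  · exact log_lt (by omega) hk

lemma Dk_ne {u v : Fin (k + 2^k)} (h : Dk k u v) : u ≠ v := by
  rintro rfl
  unfold Dk at h
  split at h
  · omega
  · next hu =>
    exact h.2 (by unfold starV; rw [if_neg hu])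

lemma Dk_antisymm (u v : Fin (k + 2^k)) : ¬ (Dk k u v ∧ Dk k v u) := by
  rintro ⟨h1, h2⟩
  unfold Dk at h1 h2
  by_cases hu : u.val < k <;> by_cases hv : v.val < k
  · rw [if_pos hu] at h1
    omega
  · -- u center, v leaf
    rw [if_pos hu] at h1
    rw [if_neg hv] at h2
    have hsu : starV k u = u.val := by unfold starV; rw [if_pos hu]
    have hsv : starV k v = Nat.log 2 (v.val - k) := by unfold starV; rw [if_neg hv]
    rw [hsu] at h2
    rw [hsv] at h1
    exact h2.2 (by omega)
  · rw [if_neg hu] at h1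
    rw [if_pos hv] at h2
    have hsu : starV k u = Nat.log 2 (u.val - k) := by unfold starV; rw [if_neg hu]
    have hsv : starV k v = v.val := by unfold starV; rw [if_pos hv]
    rw [hsv] at h1
    rw [hsu] at h2
    exact h1.2 (by omega)
  · -- both leaves
    rw [if_neg hu] at h1
    rw [if_neg hv] at h2
    have hsu : starV k u = Nat.log 2 (u.val - k) := by unfold starV; rw [if_neg hu]
    have hsv : starV k v = Nat.log 2 (v.val - k) := by unfold starV; rw [if_neg hv]
    rw [hsv] at h1
    rw [hsu] at h2
    have l1 := tb_le_log h1.1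
    have l2 := tb_le_log h2.1
    exact h1.2 (le_antisymm l1 l2)

lemma Dk_key : ∀ u w w' : Fin (k + 2^k), Dk k u w → starV k w = starV k w' → w' ≠ u →
    Dk k u w' := by
  intro u w w' h hs hne
  unfold Dk at h ⊢
  split at h
  · next hu =>
    rw [if_pos hu]
    obtain ⟨hw, hsw⟩ := h
    rw [hs] at hsw
    refine ⟨?_, hsw⟩
    by_contra hc
    push_neg at hc
    apply hne
    have : starV k w' = w'.val := by unfold starV; rw [if_pos hc]
    apply Fin.ext
    omega
  · next hu =>
    rw [if_neg hu, ← hs]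
    exact h







namespace Constr2
open Scratch Scratch2 Constr

variable {k : ℕ}

def Gk (k : ℕ) : SimpleGraph (Fin (k + 2^k)) := SimpleGraph.fromRel (Dk k)

lemma orient : IsOrientation (Gk k) (Dk k) := by
  constructor
  · intro u v
    rw [Gk, SimpleGraph.fromRel_adj]
    constructor
    · exact fun h => h.2
    · rintro (h | h)
      · exact ⟨Dk_ne h, Or.inl h⟩
      · exact ⟨(Dk_ne h).symm, Or.inr h⟩
  · exact Dk_antisymm

lemma ddist_uniform (hk : 1 ≤ k) {z w w' : Fin (k + 2^k)} (hzw : z ≠ w) (hzw' : z ≠ w')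
    (hs : starV k w = starV k w') : ddist (Dk k) z w = ddist (Dk k) z w' :=
  ddist_star_eq Dk_key hzw hzw' hs

lemma lower (hk : 1 ≤ k) {f : Fin (k + 2^k) → ℕ}
    (hf : IsDirResolvingBroadcast (Dk k) f) : 2^k ≤ ∑ v, f v := by
  classical
  set Z := Finset.univ.filter (fun v => f v = 0) with hZdef
  have hZ : Z.card ≤ k := by
    have hmaps : ∀ v ∈ Z, starV k v ∈ Finset.range k :=
      fun v _ => Finset.mem_range.2 (starV_lt hk v)
    refine le_trans (Finset.card_le_card_of_injOn (starV k) hmaps ?_) (by simp)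
    intro w hw w' hw' hs
    by_contra hne
    obtain ⟨z, hz0, hzmin⟩ := hf w w' hne
    have hfw : f w = 0 := (Finset.mem_filter.1 hw).2
    have hfw' : f w' = 0 := (Finset.mem_filter.1 hw').2
    have hzw : z ≠ w := by rintro rfl; omega
    have hzw' : z ≠ w' := by rintro rfl; omega
    exact hzmin (by rw [ddist_uniform hk hzw hzw' hs])
  have hsub : Z ⊆ Finset.univ := Finset.subset_univ _
  have hcard : (Finset.univ \ Z).card = (k + 2^k) - Z.card := by
    rw [Finset.card_sdiff_of_subset hsub, Finset.card_univ, Fintype.card_fin]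
  have hone : ∀ v ∈ Finset.univ \ Z, 1 ≤ f v := by
    intro v hv
    have := (Finset.mem_sdiff.1 hv).2
    simp [hZdef] at this
    omega
  calc 2^k ≤ (k + 2^k) - Z.card := by omega
    _ = (Finset.univ \ Z).card := hcard.symm
    _ = ∑ v ∈ Finset.univ \ Z, 1 := by simp
    _ ≤ ∑ v ∈ Finset.univ \ Z, f v := Finset.sum_le_sum hone
    _ ≤ ∑ v, f v := Finset.sum_le_sum_of_subset (Finset.sdiff_subset)

lemma ones_resolving : IsDirResolvingBroadcast (Dk k) (fun _ => 1) := by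
  intro x y hxy
  refine ⟨x, one_pos, ?_⟩
  rw [ddist_self]
  intro hc
  have h0 : (0:ℕ∞) < min (ddist (Dk k) x y) ((1:ℕ) + 1) := by
    apply lt_min
    · exact lt_of_lt_of_le zero_lt_one (one_le_ddist hxy)
    · norm_num
  rw [← hc] at h0
  simp at h0

lemma bdim_ge (hk : 1 ≤ k) : 2^k ≤ dirBdim (Dk k) := by
  apply le_csInf
  · exact ⟨k + 2^k, fun _ => 1, ones_resolving, by simp⟩
  · rintro b ⟨f, hf, rfl⟩
    exact lower hk hf

end Constr2





namespace Constr3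
open Scratch Scratch2 Constr Constr2

variable {k : ℕ}

lemma enat_two_le {e : ℕ∞} (h0 : e ≠ 0) (h1 : e ≠ 1) : 2 ≤ e := by
  induction e using ENat.recTopCoe with
  | top => exact le_top
  | coe n =>
    have hn0 : n ≠ 0 := by simpa using h0
    have hn1 : n ≠ 1 := by
      intro h; apply h1; rw [h]; rfl
    exact_mod_cast by omega

variable {W : Type*} (G : SimpleGraph W)

lemma cap_self (z : W) : min (G.edist z z) 2 = 0 := by
  rw [SimpleGraph.edist_self]
  simp

lemma cap_ne_zero {z x : W} (h : z ≠ x) : min (G.edist z x) 2 ≠ 0 := by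
  have h1 : (0:ℕ∞) < min (G.edist z x) 2 :=
    lt_min (G.edist_pos_of_ne h) (by norm_num)
  exact h1.ne'

lemma cap_adj {z x : W} (h : G.Adj z x) : min (G.edist z x) 2 = 1 := by
  rw [SimpleGraph.edist_eq_one_iff_adj.2 h]
  simp

lemma cap_two {z x : W} (hne : z ≠ x) (hna : ¬ G.Adj z x) : min (G.edist z x) 2 = 2 :=
  min_eq_right (enat_two_le (fun h => hne (SimpleGraph.edist_eq_zero_iff.1 h))
    (fun h => hna (SimpleGraph.edist_eq_one_iff_adj.1 h)))

end Constr3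

namespace Constr4
open Scratch Scratch2 Constr Constr2 Constr3

variable {k : ℕ}

lemma adj_iff (u v : Fin (k + 2^k)) : (Gk k).Adj u v ↔ (Dk k u v ∨ Dk k v u) :=
  orient.1 u v

lemma starV_leaf {v : Fin (k + 2^k)} (hv : k ≤ v.val) :
    starV k v = Nat.log 2 (v.val - k) := by
  unfold starV; rw [if_neg (by omega)]

lemma starV_center {v : Fin (k + 2^k)} (hv : v.val < k) : starV k v = v.val := by
  unfold starV; rw [if_pos hv]

lemma dk_cl {u v : Fin (k + 2^k)} (hu : u.val < k) (hv : k ≤ v.val) :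
    Dk k u v ↔ Nat.log 2 (v.val - k) = u.val := by
  unfold Dk; rw [if_pos hu, starV_leaf hv]
  exact ⟨fun h => h.2, fun h => ⟨hv, h⟩⟩

lemma dk_lc {u v : Fin (k + 2^k)} (hu : k ≤ u.val) (hv : v.val < k) :
    Dk k u v ↔ (Nat.testBit (u.val - k) v.val = true ∧ v.val ≠ Nat.log 2 (u.val - k)) := by
  unfold Dk; rw [if_neg (by omega), starV_center hv]

lemma dk_ll {u v : Fin (k + 2^k)} (hu : k ≤ u.val) (hv : k ≤ v.val) :
    Dk k u v ↔ (Nat.testBit (u.val - k) (Nat.log 2 (v.val - k)) = true ∧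
      Nat.log 2 (v.val - k) ≠ Nat.log 2 (u.val - k)) := by
  unfold Dk; rw [if_neg (by omega), starV_leaf hv]

lemma adj_cc {u v : Fin (k + 2^k)} (hu : u.val < k) (hv : v.val < k) :
    ¬ (Gk k).Adj u v := by
  rw [adj_iff]
  rintro (h | h) <;> unfold Dk at h
  · rw [if_pos hu] at h; omega
  · rw [if_pos hv] at h; omega

lemma adj_cl {u v : Fin (k + 2^k)} (hu : u.val < k) (hv : k ≤ v.val) :
    (Gk k).Adj u v ↔
      (if v.val - k = 0 then u.val = 0 else Nat.testBit (v.val - k) u.val = true) := by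
  rw [adj_iff, dk_cl hu hv, dk_lc hv hu]
  split
  · next hm =>
    rw [hm]
    simp [Nat.log_zero_right, Nat.zero_testBit, eq_comm]
  · next hm =>
    have htl := tb_log hm
    constructor
    · rintro (h | h)
      · rw [← h]; exact htl
      · exact h.1
    · intro h
      by_cases hlog : u.val = Nat.log 2 (v.val - k)
      · exact Or.inl hlog.symm
      · exact Or.inr ⟨h, hlog⟩

lemma adj_ll {u v : Fin (k + 2^k)} (hu : k ≤ u.val) (hv : k ≤ v.val) :
    (Gk k).Adj u v ↔
      ((Nat.testBit (u.val - k) (Nat.log 2 (v.val - k)) = true ∧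
        Nat.log 2 (v.val - k) ≠ Nat.log 2 (u.val - k)) ∨
       (Nat.testBit (v.val - k) (Nat.log 2 (u.val - k)) = true ∧
        Nat.log 2 (u.val - k) ≠ Nat.log 2 (v.val - k))) := by
  rw [adj_iff, dk_ll hu hv, dk_ll hv hu]

end Constr4

namespace Constr5
open Scratch Scratch2 Constr Constr2 Constr3 Constr4

variable {k : ℕ}

def Ak (k : ℕ) : Finset (Fin (k + 2^k)) :=
  Finset.univ.image (fun i : Fin k =>
    (⟨i.val + 1, by have h2 : 1 ≤ 2^k := Nat.one_le_two_pow; omega⟩ : Fin (k + 2^k)))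

lemma card_Ak : (Ak k).card = k := by
  rw [Ak, Finset.card_image_of_injective _ (fun i j hij => by
    apply Fin.ext
    have : i.val + 1 = j.val + 1 := congrArg Fin.val hij
    omega)]
  simp

lemma mem_Ak {z : Fin (k + 2^k)} : z ∈ Ak k ↔ 1 ≤ z.val ∧ z.val ≤ k := by
  constructor
  · intro hz
    rw [Ak, Finset.mem_image] at hz
    obtain ⟨i, -, rfl⟩ := hz
    have := i.isLt
    exact ⟨by simp, by simp⟩
  · rintro ⟨h1, h2⟩
    rw [Ak, Finset.mem_image]
    exact ⟨⟨z.val - 1, by omega⟩, Finset.mem_univ _, by apply Fin.ext; simp; omega⟩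

lemma testBit_high {m i : ℕ} (hm : m < 2^k) (hi : k ≤ i) :
    Nat.testBit m i = false :=
  Nat.testBit_eq_false_of_lt (lt_of_lt_of_le hm (Nat.pow_le_pow_right (by norm_num) hi))

lemma one_le_log {m : ℕ} (hm : 2 ≤ m) : 1 ≤ Nat.log 2 m :=
  (Nat.le_log_iff_pow_le one_lt_two (by omega)).2 (by simpa using hm)

lemma resolve_mixed (hk : 1 ≤ k) {x y : Fin (k + 2^k)} (hx : x.val = 0)
    (hy : k + 1 ≤ y.val) :
    ∃ z ∈ Ak k, min ((Gk k).edist z x) 2 ≠ min ((Gk k).edist z y) 2 := by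
  have hyk : k ≤ y.val := by omega
  have hm0 : y.val - k ≠ 0 := by omega
  have hmlt : y.val - k < 2^k := by omega
  by_cases hEx : ∃ j, 1 ≤ j ∧ j < k ∧ Nat.testBit (y.val - k) j = true
  · obtain ⟨j, hj1, hjk, hbit⟩ := hEx
    refine ⟨⟨j, by omega⟩, mem_Ak.2 ⟨hj1, le_of_lt hjk⟩, ?_⟩
    have hzx : min ((Gk k).edist ⟨j, by omega⟩ x) 2 = 2 := by
      apply cap_two
      · intro h
        have hh : j = x.val := congrArg Fin.val h
        omega
      · exact adj_cc hjk (by omega)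
    have hzy : min ((Gk k).edist ⟨j, by omega⟩ y) 2 = 1 := by
      apply cap_adj
      rw [adj_cl hjk hyk, if_neg hm0]
      exact hbit
    rw [hzx, hzy]
    decide
  · push_neg at hEx
    have hbit0 : Nat.testBit (y.val - k) 0 = true := by
      by_contra hb
      have : y.val - k = 0 := by
        apply Nat.eq_of_testBit_eq
        intro i
        rw [Nat.zero_testBit]
        rcases Nat.eq_zero_or_pos i with rfl | hi
        · simpa using hb
        · rcases lt_or_ge i k with h | h
          · simpa using hEx i hi h
          · exact testBit_high hmlt h
      omega
    have hm1 : y.val - k = 1 := by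
      apply Nat.eq_of_testBit_eq
      intro i
      rcases Nat.eq_zero_or_pos i with rfl | hi
      · rw [hbit0]; decide
      · have h2i : 2 ≤ 2^i := by
          calc 2 = 2^1 := rfl
            _ ≤ 2^i := Nat.pow_le_pow_right (by norm_num) hi
        have h1 : Nat.testBit 1 i = false := Nat.testBit_eq_false_of_lt (by omega)
        rw [h1]
        rcases lt_or_ge i k with h | h
        · simpa using hEx i hi h
        · exact testBit_high hmlt h
    set z : Fin (k + 2^k) := ⟨k, by have h2 : 1 ≤ 2^k := Nat.one_le_two_pow; omega⟩ with hzdef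
    refine ⟨z, mem_Ak.2 ⟨by simpa using hk, le_rfl⟩, ?_⟩
    have hzval : z.val = k := rfl
    have hzx : min ((Gk k).edist z x) 2 = 1 := by
      apply cap_adj
      have : (Gk k).Adj x z := by
        rw [adj_cl (by omega) (by omega), if_pos (by omega)]
        exact hx
      exact this.symm
    have hzy : min ((Gk k).edist z y) 2 = 2 := by
      apply cap_two
      · intro h; have := congrArg Fin.val h; omega
      · rw [adj_ll (by omega) hyk]
        have e1 : z.val - k = 0 := by omega
        rw [e1, hm1]
        simp [Nat.log_zero_right, Nat.log_one_right, Nat.zero_testBit]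
    rw [hzx, hzy]
    decide

end Constr5

namespace Constr6
open Scratch Scratch2 Constr Constr2 Constr3 Constr4 Constr5

variable {k : ℕ}

lemma resolve_ll_core (hk : 1 ≤ k) {x y : Fin (k + 2^k)} (hx : k + 1 ≤ x.val)
    (hy : k + 1 ≤ y.val)
    (hall : ∀ j, 1 ≤ j → j < k → Nat.testBit (x.val - k) j = Nat.testBit (y.val - k) j)
    (hb1 : Nat.testBit (x.val - k) 0 = true) (hb2 : Nat.testBit (y.val - k) 0 = false) :
    ∃ z ∈ Ak k, min ((Gk k).edist z x) 2 ≠ min ((Gk k).edist z y) 2 := by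
  have hxk : k ≤ x.val := by omega
  have hyk : k ≤ y.val := by omega
  have hmlt : x.val - k < 2^k := by omega
  have hmlt' : y.val - k < 2^k := by omega
  have hm'2 : 2 ≤ y.val - k := by
    rcases Nat.lt_or_ge (y.val - k) 2 with h | h
    · interval_cases h' : (y.val - k)
      · omega
      · rw [show (1:ℕ) = 1 from rfl] at hb2
        simp at hb2
    · exact h
  have hm2 : 2 ≤ x.val - k := by
    rcases Nat.lt_or_ge (x.val - k) 2 with h | h
    · have hx1 : x.val - k = 1 := by omega
      exfalso
      have : y.val - k = 0 := by
        apply Nat.eq_of_testBit_eq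
        intro i
        rw [Nat.zero_testBit]
        rcases Nat.eq_zero_or_pos i with rfl | hi
        · exact hb2
        · rcases lt_or_ge i k with hik | hik
          · rw [← hall i hi hik, hx1]
            apply Nat.testBit_eq_false_of_lt
            have h2i : 2 ≤ 2^i := by
              calc 2 = 2^1 := rfl
                _ ≤ 2^i := Nat.pow_le_pow_right (by norm_num) hi
            omega
          · exact testBit_high hmlt' hik
      omega
    · exact h
  have hlog1 : 1 ≤ Nat.log 2 (x.val - k) := one_le_log hm2
  have hlog2 : 1 ≤ Nat.log 2 (y.val - k) := one_le_log hm'2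
  set z : Fin (k + 2^k) := ⟨k, by have h2 : 1 ≤ 2^k := Nat.one_le_two_pow; omega⟩ with hzdef
  have hzk : z.val = k := rfl
  refine ⟨z, mem_Ak.2 ⟨by omega, by omega⟩, ?_⟩
  have e0 : z.val - k = 0 := by omega
  have hzx : min ((Gk k).edist z x) 2 = 1 := by
    apply cap_adj
    rw [adj_ll (by omega) hxk, e0]
    right
    constructor
    · rw [Nat.log_zero_right]
      exact hb1
    · rw [Nat.log_zero_right]
      omega
  have hzy : min ((Gk k).edist z y) 2 = 2 := by
    apply cap_two
    · intro h
      have hh : z.val = y.val := congrArg Fin.val h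
      omega
    · rw [adj_ll (by omega) hyk, e0]
      rintro (⟨h, -⟩ | ⟨h, -⟩)
      · rw [Nat.zero_testBit] at h
        exact Bool.false_ne_true h
      · rw [Nat.log_zero_right, hb2] at h
        exact Bool.false_ne_true h
  rw [hzx, hzy]
  decide

lemma resolve_ll (hk : 1 ≤ k) {x y : Fin (k + 2^k)} (hx : k + 1 ≤ x.val)
    (hy : k + 1 ≤ y.val) (hxy : x ≠ y) :
    ∃ z ∈ Ak k, min ((Gk k).edist z x) 2 ≠ min ((Gk k).edist z y) 2 := by
  have hvne : x.val ≠ y.val := fun h => hxy (Fin.ext h)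
  have hmlt : x.val - k < 2^k := by omega
  have hmlt' : y.val - k < 2^k := by omega
  by_cases hEx : ∃ j, 1 ≤ j ∧ j < k ∧ Nat.testBit (x.val - k) j ≠ Nat.testBit (y.val - k) j
  · obtain ⟨j, hj1, hjk, hbit⟩ := hEx
    refine ⟨⟨j, by omega⟩, mem_Ak.2 ⟨hj1, le_of_lt hjk⟩, ?_⟩
    have hne1 : (⟨j, by omega⟩ : Fin (k + 2^k)) ≠ x := by
      intro h
      have hh : j = x.val := congrArg Fin.val h
      omega
    have hne2 : (⟨j, by omega⟩ : Fin (k + 2^k)) ≠ y := by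
      intro h
      have hh : j = y.val := congrArg Fin.val h
      omega
    have hax : (Gk k).Adj ⟨j, by omega⟩ x ↔ Nat.testBit (x.val - k) j = true := by
      rw [adj_cl hjk (by omega), if_neg (by omega)]
    have hay : (Gk k).Adj ⟨j, by omega⟩ y ↔ Nat.testBit (y.val - k) j = true := by
      rw [adj_cl hjk (by omega), if_neg (by omega)]
    by_cases hb : Nat.testBit (x.val - k) j = true
    · have hb' : Nat.testBit (y.val - k) j = false := by
        rw [hb] at hbit
        simpa using hbit.symm
      rw [cap_adj _ (hax.2 hb), cap_two _ hne2 (fun h => by rw [hay.1 h] at hb'; simp at hb')]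
      decide
    · have hbx : Nat.testBit (x.val - k) j = false := by simpa using hb
      have hb' : Nat.testBit (y.val - k) j = true := by
        cases hyb : Nat.testBit (y.val - k) j with
        | true => rfl
        | false => rw [hbx, hyb] at hbit; exact absurd rfl hbit
      rw [cap_adj _ (hay.2 hb'), cap_two _ hne1 (fun h => by rw [hax.1 h] at hbx; simp at hbx)]
      decide
  · push_neg at hEx
    have hall : ∀ j, 1 ≤ j → j < k →
        Nat.testBit (x.val - k) j = Nat.testBit (y.val - k) j := fun j h1 h2 => hEx j h1 h2
    have hb0 : Nat.testBit (x.val - k) 0 ≠ Nat.testBit (y.val - k) 0 := by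
      intro h
      apply hvne
      have : x.val - k = y.val - k := by
        apply Nat.eq_of_testBit_eq
        intro i
        rcases Nat.eq_zero_or_pos i with rfl | hi
        · exact h
        · rcases lt_or_ge i k with hik | hik
          · exact hall i hi hik
          · rw [testBit_high hmlt hik, testBit_high hmlt' hik]
      omega
    by_cases hbx : Nat.testBit (x.val - k) 0 = true
    · have hby : Nat.testBit (y.val - k) 0 = false := by
        cases hyb : Nat.testBit (y.val - k) 0 with
        | false => rfl
        | true => rw [hbx, hyb] at hb0; exact absurd rfl hb0
      exact resolve_ll_core hk hx hy hall hbx hby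
    · have hbx' : Nat.testBit (x.val - k) 0 = false := by simpa using hbx
      have hby : Nat.testBit (y.val - k) 0 = true := by
        cases hyb : Nat.testBit (y.val - k) 0 with
        | true => rfl
        | false => rw [hbx', hyb] at hb0; exact absurd rfl hb0
      obtain ⟨z, hz, hne⟩ := resolve_ll_core hk hy hx
        (fun j h1 h2 => (hall j h1 h2).symm) hby hbx'
      exact ⟨z, hz, hne.symm⟩

lemma resolving (hk : 1 ≤ k) : IsAdjResolving (Gk k) ↑(Ak k) := by
  intro x y hxy
  by_cases hx : x ∈ Ak k
  · refine ⟨x, hx, ?_⟩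
    rw [cap_self]
    exact (cap_ne_zero _ hxy).symm
  by_cases hy : y ∈ Ak k
  · refine ⟨y, hy, ?_⟩
    rw [cap_self (Gk k) y]
    exact cap_ne_zero _ (Ne.symm hxy)
  have px : x.val = 0 ∨ k + 1 ≤ x.val := by
    have h1 := x.isLt
    have h2 : ¬(1 ≤ x.val ∧ x.val ≤ k) := fun h => hx (mem_Ak.2 h)
    omega
  have py : y.val = 0 ∨ k + 1 ≤ y.val := by
    have h1 := y.isLt
    have h2 : ¬(1 ≤ y.val ∧ y.val ≤ k) := fun h => hy (mem_Ak.2 h)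
    omega
  rcases px with px | px <;> rcases py with py | py
  · exact absurd (Fin.ext (by omega)) hxy
  · obtain ⟨z, hz, hne⟩ := resolve_mixed hk px py
    exact ⟨z, hz, hne⟩
  · obtain ⟨z, hz, hne⟩ := resolve_mixed hk py px
    exact ⟨z, hz, hne.symm⟩
  · obtain ⟨z, hz, hne⟩ := resolve_ll hk px py hxy
    exact ⟨z, hz, hne⟩

lemma adim_le (hk : 1 ≤ k) : adim (Gk k) ≤ k :=
  Nat.sInf_le ⟨Ak k, resolving hk, card_Ak⟩

end Constr6

end Constr

/-- There is a graph `G` on `k + 2^k` vertices with `adim(G) ≤ k` having an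
orientation `G⃗` with `bdim(G⃗) ≥ 2^k`. -/
theorem stmt_13 (k : ℕ) (hk : 1 ≤ k) :
    ∃ (G : SimpleGraph (Fin (k + 2 ^ k))) (D : Fin (k + 2 ^ k) → Fin (k + 2 ^ k) → Prop),
      IsOrientation G D ∧ adim G ≤ k ∧ 2 ^ k ≤ dirBdim D := by
  exact ⟨Constr.Constr2.Gk k, Constr.Dk k, Constr.Constr2.orient,
    Constr.Constr6.adim_le hk, Constr.Constr2.bdim_ge hk⟩
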